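/- arXiv:1312.6777 — 2 statements merged into one kernel-verified Lean document; each statement's English description precedes it below -/
import Mathlib

section
/- Let T : H → K be a bounded surjective linear operator between Hilbert spaces and let P be the orthogonal projection of H onto (ker T)ᗮ. Then for all f, g ∈ H, ⟨P f, g⟩ = ⟨(T T*)⁻¹ T f, T g⟩. -/
open ContinuousLinearMap
open scoped InnerProductSpace

/-- If `T : H → K` is bounded and surjective, `S` is the (continuous) inverse of `T T*`,
and `P` is the orthogonal projection of `H` onto `(ker T)ᗮ`, then
`⟨P f, g⟩ = ⟨(T T*)⁻¹ T f, T g⟩` for all `f, g ∈ H`. -/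
theorem orthogonalProjection_ker_orthogonal_eq
    {H K : Type*} [NormedAddCommGroup H] [InnerProductSpace ℂ H] [CompleteSpace H]
    [NormedAddCommGroup K] [InnerProductSpace ℂ K] [CompleteSpace K]
    (T : H →L[ℂ] K) (hT : Function.Surjective T)
    (S : K →L[ℂ] K)
    (hS1 : (T ∘L (adjoint T)) ∘L S = 1) (hS2 : S ∘L (T ∘L (adjoint T)) = 1)
    (P : H →L[ℂ] H)
    (hP1 : ∀ x, P x ∈ (LinearMap.ker (T : H →ₗ[ℂ] K))ᗮ)
    (hP2 : ∀ x, x - P x ∈ ((LinearMap.ker (T : H →ₗ[ℂ] K))ᗮ)ᗮ) :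
    ∀ f g : H, ⟪P f, g⟫_ℂ = ⟪S (T f), T g⟫_ℂ := by
  intro f g
  have hclosed : ((LinearMap.ker (T : H →ₗ[ℂ] K))ᗮ)ᗮ = LinearMap.ker (T : H →ₗ[ℂ] K) := by
    rw [Submodule.orthogonal_orthogonal_eq_closure]
    exact (ContinuousLinearMap.isClosed_ker T).submodule_topologicalClosure_eq
  set u : H := adjoint T (S (T f)) with hu
  have hu_mem : u ∈ (LinearMap.ker (T : H →ₗ[ℂ] K))ᗮ := by
    intro x hx
    rw [hu, adjoint_inner_right]
    have hx' : T x = 0 := LinearMap.mem_ker.mp hx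
    simp [hx']
  have hTu : T u = T f := by
    have := congrArg (fun A : K →L[ℂ] K => A (T f)) hS1
    simpa [hu, comp_apply] using this
  have hTPf : T (P f) = T f := by
    have h1 : f - P f ∈ LinearMap.ker (T : H →ₗ[ℂ] K) := hclosed ▸ hP2 f
    have h2 : T (f - P f) = 0 := LinearMap.mem_ker.mp h1
    rw [map_sub, sub_eq_zero] at h2
    exact h2.symm
  have hdiff_ker : P f - u ∈ LinearMap.ker (T : H →ₗ[ℂ] K) := by
    rw [LinearMap.mem_ker, map_sub, ContinuousLinearMap.coe_coe, hTu, hTPf, sub_self]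
  have hdiff_orth : P f - u ∈ (LinearMap.ker (T : H →ₗ[ℂ] K))ᗮ := Submodule.sub_mem _ (hP1 f) hu_mem
  have hzero : P f - u = 0 := by
    have := hdiff_orth (P f - u) hdiff_ker
    exact inner_self_eq_zero.mp this
  have hPu : P f = u := sub_eq_zero.mp hzero
  rw [hPu, hu, adjoint_inner_left]
end

section
/- Let T : H → K be a bounded operator between Hilbert spaces whose range N = ran T is closed and of finite codimension in K. Define G : K → K by G = (T T*)|_N ⊕ I on the orthogonal decomposition K = N ⊕ Nᗮ (i.e., G x = T T* x for x ∈ N and G x = x for x ∈ Nᗮ). Then G is invertible and for all f, g ∈ H, ⟨P f, g⟩ = ⟨G⁻¹ T f, T g⟩, where P is the orthogonal projection of H onto (ker T)ᗮ. -/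
open ContinuousLinearMap
open scoped InnerProductSpace

set_option maxHeartbeats 1000000

/-- Auxiliary: for a closed-range operator, the adjoint is bounded below on the range. -/
private lemma aux_adjoint_bound {H K : Type*} [NormedAddCommGroup H] [InnerProductSpace ℂ H]
    [CompleteSpace H] [NormedAddCommGroup K] [InnerProductSpace ℂ K] [CompleteSpace K]
    (T : H →L[ℂ] K) (hN : IsClosed ((LinearMap.range (T : H →ₗ[ℂ] K) : Submodule ℂ K) : Set K)) :
    ∃ C : ℝ, 0 ≤ C ∧ ∀ x ∈ LinearMap.range (T : H →ₗ[ℂ] K), ‖x‖ ≤ C * ‖adjoint T x‖ := by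
  haveI : CompleteSpace (LinearMap.range (T : H →ₗ[ℂ] K)) := hN.completeSpace_coe
  haveI : CompleteSpace (LinearMap.ker (T : H →ₗ[ℂ] K)) := T.isClosed_ker.completeSpace_coe
  set Kc : Submodule ℂ H := (LinearMap.ker (T : H →ₗ[ℂ] K))ᗮ with hKc
  have hmem : ∀ x : Kc, (T.comp (Submodule.subtypeL Kc)) x ∈ LinearMap.range (T : H →ₗ[ℂ] K) :=
    fun x => LinearMap.mem_range_self _ _
  set T₂ : Kc →L[ℂ] LinearMap.range (T : H →ₗ[ℂ] K) :=
    ContinuousLinearMap.codRestrict (T.comp (Submodule.subtypeL Kc)) _ hmem with hT₂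
  have hT₂app : ∀ x : Kc, (T₂ x : K) = T (x : H) := fun x => rfl
  have hker : LinearMap.ker (T₂ : Kc →ₗ[ℂ] LinearMap.range (T : H →ₗ[ℂ] K)) = ⊥ := by
    rw [LinearMap.ker_eq_bot']
    intro m hm
    have h0 : T (m : H) = 0 := by
      have := congrArg Subtype.val hm
      simpa [hT₂app] using this
    have hmo : ⟪(m : H), (m : H)⟫_ℂ = 0 :=
      (Submodule.mem_orthogonal _ _).mp m.2 (m : H) h0
    have : (m : H) = 0 := inner_self_eq_zero.mp hmo
    exact Subtype.ext this
  have hrange : LinearMap.range (T₂ : Kc →ₗ[ℂ] LinearMap.range (T : H →ₗ[ℂ] K)) = ⊤ := by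
    rw [LinearMap.range_eq_top]
    rintro ⟨y, f, rfl⟩
    refine ⟨⟨f - (Submodule.orthogonalProjectionOnto (LinearMap.ker (T : H →ₗ[ℂ] K)) f : H),
      Submodule.sub_starProjection_mem_orthogonal (K := LinearMap.ker (T : H →ₗ[ℂ] K)) f⟩, ?_⟩
    apply Subtype.ext
    have hk : T ((Submodule.orthogonalProjectionOnto (LinearMap.ker (T : H →ₗ[ℂ] K)) f : H)) = 0 :=
      (Submodule.orthogonalProjectionOnto (LinearMap.ker (T : H →ₗ[ℂ] K)) f).2
    simp [hT₂app, map_sub, hk, -Submodule.coe_orthogonalProjectionOnto_apply]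
  set e := ContinuousLinearEquiv.ofBijective T₂ hker hrange with he
  set C : ℝ := ‖(e.symm : LinearMap.range (T : H →ₗ[ℂ] K) →L[ℂ] Kc)‖ with hCdef
  have hCnn : 0 ≤ C := norm_nonneg _
  -- bound on (ker T)ᗮ : ‖f‖ ≤ C * ‖T f‖
  have hbound : ∀ f : Kc, ‖(f : H)‖ ≤ C * ‖T (f : H)‖ := by
    intro f
    have h1 : e.symm (e f) = f := e.symm_apply_apply f
    have h2 : ‖e.symm (e f)‖ ≤ C * ‖e f‖ :=
      (e.symm : LinearMap.range (T : H →ₗ[ℂ] K) →L[ℂ] Kc).le_opNorm (e f)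
    have h3 : e f = T₂ f := by
      rw [he, ContinuousLinearEquiv.coeFn_ofBijective]
    have h4 : ‖e f‖ = ‖T (f : H)‖ := by rw [h3]; rfl
    calc ‖(f : H)‖ = ‖f‖ := rfl
      _ = ‖e.symm (e f)‖ := by rw [h1]
      _ ≤ C * ‖e f‖ := h2
      _ = C * ‖T (f : H)‖ := by rw [h4]
  refine ⟨C, hCnn, ?_⟩
  rintro x ⟨f, rfl⟩
  set f' : Kc := ⟨f - (Submodule.orthogonalProjectionOnto (LinearMap.ker (T : H →ₗ[ℂ] K)) f : H),
    Submodule.sub_starProjection_mem_orthogonal (K := LinearMap.ker (T : H →ₗ[ℂ] K)) f⟩ with hf'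
  have hTf' : T (f' : H) = T f := by
    have hk : T ((Submodule.orthogonalProjectionOnto (LinearMap.ker (T : H →ₗ[ℂ] K)) f : H)) = 0 :=
      (Submodule.orthogonalProjectionOnto (LinearMap.ker (T : H →ₗ[ℂ] K)) f).2
    simp [hf', map_sub, hk, -Submodule.coe_orthogonalProjectionOnto_apply]
  have hsq : ‖T f‖ ^ 2 ≤ (C * ‖adjoint T (T f)‖) * ‖T f‖ := by
    have h1 : (‖T f‖ : ℝ) ^ 2 = RCLike.re ⟪T f, T f⟫_ℂ := (inner_self_eq_norm_sq _).symm
    have h2 : ⟪T f, T f⟫_ℂ = ⟪adjoint T (T f), (f' : H)⟫_ℂ := by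
      rw [adjoint_inner_left, hTf']
    have h3 : RCLike.re ⟪adjoint T (T f), (f' : H)⟫_ℂ ≤ ‖adjoint T (T f)‖ * ‖(f' : H)‖ :=
      re_inner_le_norm _ _
    have h4 : ‖(f' : H)‖ ≤ C * ‖T f‖ := by
      have := hbound f'
      rwa [hTf'] at this
    calc ‖T f‖ ^ 2 = RCLike.re ⟪adjoint T (T f), (f' : H)⟫_ℂ := by rw [h1, h2]
      _ ≤ ‖adjoint T (T f)‖ * ‖(f' : H)‖ := h3
      _ ≤ ‖adjoint T (T f)‖ * (C * ‖T f‖) := by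
          exact mul_le_mul_of_nonneg_left h4 (norm_nonneg _)
      _ = (C * ‖adjoint T (T f)‖) * ‖T f‖ := by ring
  rcases eq_or_lt_of_le (norm_nonneg (T f)) with h0 | h0
  · change ‖T f‖ ≤ C * ‖adjoint T (T f)‖
    rw [← h0]
    positivity
  · have := hsq
    rw [pow_two] at this
    exact le_of_mul_le_mul_right this h0

/-- Let `T : H → K` be bounded with closed range `N = ran T` of finite codimension.
If `G : K → K` agrees with `T T*` on `N` and with the identity on `Nᗮ`, then `G` is
invertible and `⟨P f, g⟩ = ⟨G⁻¹ T f, T g⟩` for all `f, g ∈ H`, where `P` is the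
orthogonal projection onto `(ker T)ᗮ`. -/
theorem projection_formula_finite_codim_range
    {H K : Type*} [NormedAddCommGroup H] [InnerProductSpace ℂ H] [CompleteSpace H]
    [NormedAddCommGroup K] [InnerProductSpace ℂ K] [CompleteSpace K]
    (T : H →L[ℂ] K)
    (hN : IsClosed ((LinearMap.range (T : H →ₗ[ℂ] K) : Submodule ℂ K) : Set K))
    (hcodim : FiniteDimensional ℂ ((LinearMap.range (T : H →ₗ[ℂ] K))ᗮ))
    (G : K →L[ℂ] K)
    (hG1 : ∀ x ∈ LinearMap.range (T : H →ₗ[ℂ] K), G x = T ((adjoint T) x))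
    (hG2 : ∀ x ∈ (LinearMap.range (T : H →ₗ[ℂ] K))ᗮ, G x = x)
    (P : H →L[ℂ] H)
    (hP1 : ∀ x, P x ∈ (LinearMap.ker (T : H →ₗ[ℂ] K))ᗮ)
    (hP2 : ∀ x, x - P x ∈ ((LinearMap.ker (T : H →ₗ[ℂ] K))ᗮ)ᗮ) :
    ∃ G' : K →L[ℂ] K, G ∘L G' = 1 ∧ G' ∘L G = 1 ∧
      ∀ f g : H, ⟪P f, g⟫_ℂ = ⟪G' (T f), T g⟫_ℂ := by
  obtain ⟨C, hC0, hC⟩ := aux_adjoint_bound T hN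
  set N : Submodule ℂ K := LinearMap.range (T : H →ₗ[ℂ] K) with hNdef
  haveI : CompleteSpace N := hN.completeSpace_coe
  haveI : CompleteSpace (LinearMap.ker (T : H →ₗ[ℂ] K)) := T.isClosed_ker.completeSpace_coe
  -- decomposition data
  have hproj : ∀ x : K, (Submodule.orthogonalProjectionOnto N x : K) ∈ N :=
    fun x => (Submodule.orthogonalProjectionOnto N x).2
  have hperp : ∀ x : K, x - Submodule.orthogonalProjectionOnto N x ∈ Nᗮ :=
    fun x => Submodule.sub_starProjection_mem_orthogonal (K := N) x
  have hGx : ∀ x : K,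
      G x = T (adjoint T (Submodule.orthogonalProjectionOnto N x : K)) + (x - Submodule.orthogonalProjectionOnto N x) := by
    intro x
    have h1 := hG1 _ (hproj x)
    have h2 := hG2 _ (hperp x)
    have h3 : G x = G (Submodule.orthogonalProjectionOnto N x : K) + G (x - Submodule.orthogonalProjectionOnto N x) := by
      rw [← map_add]
      congr 1
      abel
    rw [h3, h1, h2]
  -- lower bound for T T* on N
  have hTTs : ∀ a ∈ N, ‖a‖ ≤ (C * C) * ‖T (adjoint T a)‖ := by
    intro a ha
    rcases eq_or_lt_of_le (norm_nonneg (adjoint T a)) with h0 | h0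
    · have ha0 : ‖a‖ ≤ C * ‖adjoint T a‖ := hC a ha
      have : ‖a‖ ≤ 0 := by rw [← h0] at ha0; simpa using ha0
      have hz : ‖a‖ = 0 := le_antisymm this (norm_nonneg a)
      rw [hz]
      positivity
    · have key : ‖adjoint T a‖ ≤ C * ‖T (adjoint T a)‖ := by
        have h1 : (‖adjoint T a‖ : ℝ) ^ 2 = RCLike.re ⟪adjoint T a, adjoint T a⟫_ℂ :=
          (inner_self_eq_norm_sq _).symm
        have h2 : ⟪adjoint T a, adjoint T a⟫_ℂ = ⟪a, T (adjoint T a)⟫_ℂ :=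
          adjoint_inner_left T (adjoint T a) a
        have h3 : RCLike.re ⟪a, T (adjoint T a)⟫_ℂ ≤ ‖a‖ * ‖T (adjoint T a)‖ :=
          re_inner_le_norm _ _
        have h4 : ‖a‖ ≤ C * ‖adjoint T a‖ := hC a ha
        have hsq : ‖adjoint T a‖ ^ 2 ≤ (C * ‖T (adjoint T a)‖) * ‖adjoint T a‖ := by
          calc ‖adjoint T a‖ ^ 2 = RCLike.re ⟪a, T (adjoint T a)⟫_ℂ := by rw [h1, h2]
            _ ≤ ‖a‖ * ‖T (adjoint T a)‖ := h3
            _ ≤ (C * ‖adjoint T a‖) * ‖T (adjoint T a)‖ :=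
                mul_le_mul_of_nonneg_right h4 (norm_nonneg _)
            _ = (C * ‖T (adjoint T a)‖) * ‖adjoint T a‖ := by ring
        rw [pow_two] at hsq
        exact le_of_mul_le_mul_right hsq h0
      calc ‖a‖ ≤ C * ‖adjoint T a‖ := hC a ha
        _ ≤ C * (C * ‖T (adjoint T a)‖) := mul_le_mul_of_nonneg_left key hC0
        _ = (C * C) * ‖T (adjoint T a)‖ := by ring
  -- orthogonality facts
  have hinNbot : ∀ (u b : K), u ∈ N → b ∈ Nᗮ → ⟪u, b⟫_ℂ = 0 :=
    fun u b hu hb => (Submodule.mem_orthogonal _ _).mp hb u hu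
  set D : ℝ := max (C * C) 1 with hD
  have hD1 : (1 : ℝ) ≤ D := le_max_right _ _
  have hD0 : (0 : ℝ) < D := lt_of_lt_of_le one_pos hD1
  -- G is bounded below
  have hGlow : ∀ x : K, ‖x‖ ≤ D * ‖G x‖ := by
    intro x
    set a : K := (Submodule.orthogonalProjectionOnto N x : K) with hadef
    set b : K := x - Submodule.orthogonalProjectionOnto N x with hbdef
    have hxa : x = a + b := by rw [hadef, hbdef]; abel
    have haN : a ∈ N := hproj x
    have hbO : b ∈ Nᗮ := hperp x
    have hTTN : T (adjoint T a) ∈ N := LinearMap.mem_range_self _ _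
    have hg : G x = T (adjoint T a) + b := hGx x
    have hxsq : ‖x‖ ^ 2 = ‖a‖ ^ 2 + ‖b‖ ^ 2 := by
      rw [hxa, norm_add_sq (𝕜 := ℂ)]
      rw [hinNbot a b haN hbO]
      simp
    have hgsq : ‖G x‖ ^ 2 = ‖T (adjoint T a)‖ ^ 2 + ‖b‖ ^ 2 := by
      rw [hg, norm_add_sq (𝕜 := ℂ)]
      rw [hinNbot _ b hTTN hbO]
      simp
    have h1 : ‖a‖ ≤ D * ‖T (adjoint T a)‖ := by
      calc ‖a‖ ≤ (C * C) * ‖T (adjoint T a)‖ := hTTs a haN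
        _ ≤ D * ‖T (adjoint T a)‖ :=
            mul_le_mul_of_nonneg_right (le_max_left _ _) (norm_nonneg _)
    have h2 : ‖b‖ ≤ D * ‖b‖ := by
      nlinarith [norm_nonneg b]
    have hsq : ‖x‖ ^ 2 ≤ (D * ‖G x‖) ^ 2 := by
      have e1 : (D * ‖G x‖) ^ 2 = D ^ 2 * ‖T (adjoint T a)‖ ^ 2 + D ^ 2 * ‖b‖ ^ 2 := by
        rw [mul_pow, hgsq]; ring
      rw [hxsq, e1]
      have i1 : ‖a‖ ^ 2 ≤ D ^ 2 * ‖T (adjoint T a)‖ ^ 2 := by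
        have := mul_self_le_mul_self (norm_nonneg a) h1
        nlinarith
      have i2 : ‖b‖ ^ 2 ≤ D ^ 2 * ‖b‖ ^ 2 := by
        nlinarith [sq_nonneg ‖b‖]
      linarith
    exact le_of_pow_le_pow_left₀ two_ne_zero (by positivity) hsq
  -- G is injective
  have hGinj : Function.Injective G := by
    intro x y hxy
    have h0 : G (x - y) = 0 := by rw [map_sub, hxy, sub_self]
    have := hGlow (x - y)
    rw [h0] at this
    simp only [norm_zero, mul_zero] at this
    have : ‖x - y‖ = 0 := le_antisymm this (norm_nonneg _)
    rwa [norm_eq_zero, sub_eq_zero] at this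
  have hGker : LinearMap.ker (G : K →ₗ[ℂ] K) = ⊥ := LinearMap.ker_eq_bot.mpr hGinj
  -- G has closed range
  have hanti : AntilipschitzWith (D.toNNReal) G := by
    apply G.antilipschitz_of_bound
    intro x
    have := hGlow x
    rwa [Real.coe_toNNReal D hD0.le]
  have hclosed : IsClosed (Set.range G) := hanti.isClosed_range G.uniformContinuous
  haveI : CompleteSpace (LinearMap.range (G : K →ₗ[ℂ] K)) := by
    have : IsClosed ((LinearMap.range (G : K →ₗ[ℂ] K) : Submodule ℂ K) : Set K) := by
      simpa [LinearMap.coe_range] using hclosed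
    exact this.completeSpace_coe
  -- G is surjective
  have hGrange : LinearMap.range (G : K →ₗ[ℂ] K) = ⊤ := by
    rw [← Submodule.orthogonal_eq_bot_iff]
    rw [Submodule.eq_bot_iff]
    intro y hy
    set a : K := (Submodule.orthogonalProjectionOnto N y : K) with hadef
    set b : K := y - Submodule.orthogonalProjectionOnto N y with hbdef
    have hya : y = a + b := by rw [hadef, hbdef]; abel
    have haN : a ∈ N := hproj y
    have hbO : b ∈ Nᗮ := hperp y
    have hTTN : T (adjoint T a) ∈ N := LinearMap.mem_range_self _ _
    have hg : G y = T (adjoint T a) + b := hGx y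
    have h0 : ⟪G y, y⟫_ℂ = 0 :=
      (Submodule.mem_orthogonal _ _).mp hy (G y) (LinearMap.mem_range_self _ _)
    have h0' : ⟪y, G y⟫_ℂ = 0 := inner_eq_zero_symm.mp h0
    have hexp : ⟪y, G y⟫_ℂ = ⟪adjoint T a, adjoint T a⟫_ℂ + ⟪b, b⟫_ℂ := by
      rw [hg]
      conv_lhs => rw [hya]
      rw [inner_add_left, inner_add_right, inner_add_right]
      rw [hinNbot a b haN hbO]
      rw [inner_eq_zero_symm.mp (hinNbot _ b hTTN hbO)]
      rw [← adjoint_inner_left T (adjoint T a) a]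
      ring
    have hS : ⟪adjoint T a, adjoint T a⟫_ℂ + ⟪b, b⟫_ℂ = 0 := by
      rw [← hexp]; exact h0'
    have hre : ‖adjoint T a‖ ^ 2 + ‖b‖ ^ 2 = 0 := by
      have := congrArg RCLike.re hS
      simpa [map_add, inner_self_eq_norm_sq, ← Complex.ofReal_pow, Complex.ofReal_re] using this
    have hb0 : b = 0 := by
      have : ‖b‖ ^ 2 = 0 := by nlinarith [sq_nonneg ‖adjoint T a‖, sq_nonneg ‖b‖]
      have : ‖b‖ = 0 := by nlinarith [norm_nonneg b]
      rwa [norm_eq_zero] at this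
    have hTa0 : ‖adjoint T a‖ = 0 := by
      have : ‖adjoint T a‖ ^ 2 = 0 := by nlinarith [sq_nonneg ‖adjoint T a‖, sq_nonneg ‖b‖]
      nlinarith [norm_nonneg (adjoint T a)]
    have ha0 : a = 0 := by
      have := hC a haN
      rw [hTa0, mul_zero] at this
      have : ‖a‖ = 0 := le_antisymm this (norm_nonneg a)
      rwa [norm_eq_zero] at this
    rw [hya, ha0, hb0, add_zero]
  -- the inverse
  set e := ContinuousLinearEquiv.ofBijective G hGker hGrange with he
  have heapp : ∀ x, e x = G x := fun x => by
    rw [he, ContinuousLinearEquiv.coeFn_ofBijective]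
  refine ⟨(e.symm : K →L[ℂ] K), ?_, ?_, ?_⟩
  · ext x
    simp only [coe_comp', Function.comp_apply, ContinuousLinearEquiv.coe_coe, one_apply]
    rw [← heapp]
    exact e.apply_symm_apply x
  · ext x
    simp only [coe_comp', Function.comp_apply, ContinuousLinearEquiv.coe_coe, one_apply]
    rw [← heapp]
    exact e.symm_apply_apply x
  · intro f g
    simp only [ContinuousLinearEquiv.coe_coe]
    set u : K := e.symm (T f) with hu
    have hGu : G u = T f := by
      rw [← heapp]
      exact e.apply_symm_apply (T f)
    have huN : u ∈ N := by
      set a : K := (Submodule.orthogonalProjectionOnto N u : K) with hadef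
      have hbO : u - (Submodule.orthogonalProjectionOnto N u : K) ∈ Nᗮ := hperp u
      have h5 : T (adjoint T a) + (u - (Submodule.orthogonalProjectionOnto N u : K)) = T f :=
        (hGx u).symm.trans hGu
      have h6 : u - (Submodule.orthogonalProjectionOnto N u : K) = T f - T (adjoint T a) :=
        eq_sub_of_add_eq' h5
      have hbN : u - (Submodule.orthogonalProjectionOnto N u : K) ∈ N := by
        rw [h6]
        exact N.sub_mem (LinearMap.mem_range_self _ _) (LinearMap.mem_range_self _ _)
      have hb0 : u - (Submodule.orthogonalProjectionOnto N u : K) = 0 :=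
        inner_self_eq_zero.mp (hinNbot _ _ hbN hbO)
      have : u = (Submodule.orthogonalProjectionOnto N u : K) := by rwa [sub_eq_zero] at hb0
      rw [this]
      exact hproj u
    have hTu : T (adjoint T u) = T f := by
      rw [← hG1 u huN]
      exact hGu
    have hfP : f - P f ∈ LinearMap.ker (T : H →ₗ[ℂ] K) := by
      have h := hP2 f
      rwa [Submodule.orthogonal_orthogonal] at h
    have hTP : T (P f) = T f := by
      have h : T (f - P f) = 0 := hfP
      rw [map_sub, sub_eq_zero] at h
      exact h.symm
    have hker1 : adjoint T u - P f ∈ LinearMap.ker (T : H →ₗ[ℂ] K) := by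
      show T (adjoint T u - P f) = 0
      rw [map_sub, hTu, hTP, sub_self]
    have hmemTu : adjoint T u ∈ (LinearMap.ker (T : H →ₗ[ℂ] K))ᗮ := by
      rw [Submodule.mem_orthogonal]
      intro v hv
      rw [adjoint_inner_right]
      have : T v = 0 := hv
      rw [this, inner_zero_left]
    have hperp1 : adjoint T u - P f ∈ (LinearMap.ker (T : H →ₗ[ℂ] K))ᗮ :=
      Submodule.sub_mem _ hmemTu (hP1 f)
    have hPeq : adjoint T u = P f := by
      have h0 : ⟪adjoint T u - P f, adjoint T u - P f⟫_ℂ = 0 :=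
        (Submodule.mem_orthogonal _ _).mp hperp1 _ hker1
      have h1 := inner_self_eq_zero.mp h0
      rwa [sub_eq_zero] at h1
    calc ⟪P f, g⟫_ℂ = ⟪adjoint T u, g⟫_ℂ := by rw [hPeq]
      _ = ⟪u, T g⟫_ℂ := adjoint_inner_left T g u
end
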